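/- Let k ≥ 2 and let Δ be an Eulerian simplicial complex of dimension 2k with n ≥ 2k + 2 vertices that is (k−1)-neighborly. Then f_k(Δ) + (k+2)·(C(n, k) − f_{k−1}(Δ)) = Σ_{i=0}^{k} C(2k+1−i, k)·C(n−2k−2+i, i) + C(n−k−2, k). (The right-hand side equals the number of k-dimensional faces of the cyclic (2k+1)-polytope with n vertices, and C(n, k) − f_{k−1}(Δ) equals m_{k−1}(Δ), the number of missing faces of cardinality k.) -/

import Mathlib

/-- A finite abstract simplicial complex on vertex set `Fin n`: a collection of subsets of
`Fin n` (the faces) closed under taking subsets and containing every singleton. -/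
structure AbsComplex (n : ℕ) where
  faces : Finset (Finset (Fin n))
  down_closed : ∀ F ∈ faces, ∀ G ⊆ F, G ∈ faces
  singleton_mem : ∀ v : Fin n, ({v} : Finset (Fin n)) ∈ faces

namespace AbsComplex

variable {n : ℕ}

/-- `fNum Δ i` is the number of faces of `Δ` of cardinality `i + 1`
(i.e. of dimension `i`). -/
def fNum (Δ : AbsComplex n) (i : ℕ) : ℕ :=
  (Δ.faces.filter fun F => F.card = i + 1).card

/-- A missing face of `Δ`: a set which is not a face but all of whose proper subsets
are faces. -/
def IsMissing (Δ : AbsComplex n) (F : Finset (Fin n)) : Prop :=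
  F ∉ Δ.faces ∧ ∀ G ⊂ F, G ∈ Δ.faces

/-- `mNum Δ i` is the number of missing faces of `Δ` of cardinality `i + 1`
(i.e. of dimension `i`). -/
noncomputable def mNum (Δ : AbsComplex n) (i : ℕ) : ℕ :=
  {F : Finset (Fin n) | Δ.IsMissing F ∧ F.card = i + 1}.ncard

/-- The faces of the link of the face `F` in `Δ`: all faces `G` with `G ∩ F = ∅`
and `G ∪ F` a face. -/
def linkFaces (Δ : AbsComplex n) (F : Finset (Fin n)) : Finset (Finset (Fin n)) :=
  Δ.faces.filter fun G => G ∩ F = ∅ ∧ G ∪ F ∈ Δ.faces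

/-- The reduced Euler characteristic `χ̃ = −1 + f₀ − f₁ + f₂ − ⋯` of a (downward closed,
nonempty) collection of faces, computed as `∑_F (−1)^{|F|−1}` over all faces `F`
(including the empty face). -/
def reducedEuler (s : Finset (Finset (Fin n))) : ℤ :=
  ∑ F ∈ s, (-1 : ℤ) ^ (F.card + 1)

/-- `Δ.IsEulerianDim D` says that `Δ` is an Eulerian complex of dimension `D`: every face has
cardinality at most `D + 1`, some face has cardinality `D + 1`, and for every face `F`
(including the empty face) the reduced Euler characteristic of the link of `F` equals
`(−1)^{D − |F|}` (written as `(−1)^{D + |F|}`, which has the same parity). -/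
def IsEulerianDim (Δ : AbsComplex n) (D : ℕ) : Prop :=
  (∀ F ∈ Δ.faces, F.card ≤ D + 1) ∧ (∃ F ∈ Δ.faces, F.card = D + 1) ∧
    ∀ F ∈ Δ.faces, reducedEuler (Δ.linkFaces F) = (-1 : ℤ) ^ (D + F.card)

/-- `Δ` is `j`-neighborly: every `j`-element subset of the vertex set is a face. -/
def Neighborly (Δ : AbsComplex n) (j : ℕ) : Prop :=
  ∀ S : Finset (Fin n), S.card = j → S ∈ Δ.faces

/-- `Δ` is flag: every missing face has cardinality `2`. -/
def Flag (Δ : AbsComplex n) : Prop :=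
  ∀ F : Finset (Fin n), Δ.IsMissing F → F.card = 2

end AbsComplex

open Finset

/-! ### Auxiliary arithmetic lemmas -/

private lemma ds_altsum (n : ℕ) (hn : 1 ≤ n) :
    ∀ i : ℕ, ∑ j ∈ range (i+1), (-1:ℤ)^j * (n.choose j) = (-1)^i * ((n-1).choose i) := by
  intro i
  induction i with
  | zero => simp
  | succ i ih =>
    rw [Finset.sum_range_succ, ih]
    have h1 : n.choose (i+1) = (n-1).choose i + (n-1).choose (i+1) := by
      conv_lhs => rw [show n = (n-1)+1 by omega]
      exact Nat.choose_succ_succ _ _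
    rw [h1]; push_cast; ring

private lemma ds_I1 : ∀ (j m r : ℕ), j ≤ m →
    ∑ s ∈ range (j+1), (-1:ℤ)^s * (j.choose s) * ((m - s).choose r) =
      if r ≤ m then (((m - j).choose (m - r) : ℕ) : ℤ) else 0 := by
  intro j
  induction j with
  | zero =>
    intro m r _
    rw [Finset.sum_range_one]
    simp only [Nat.sub_zero, pow_zero, Nat.choose_self, Nat.cast_one, one_mul]
    by_cases h : r ≤ m
    · rw [if_pos h, Nat.choose_symm h]
    · rw [if_neg h, Nat.choose_eq_zero_of_lt (show m < r by omega)]; norm_num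
  | succ j ih =>
    intro m r hjm
    set f : ℕ → ℤ := fun s => (-1:ℤ)^s * ((j+1).choose s) * ((m - s).choose r) with hf
    set g : ℕ → ℤ := fun s => (-1:ℤ)^s * (j.choose s) * ((m - s).choose r) with hg
    set t : ℕ → ℤ := fun s => (-1:ℤ)^s * (j.choose s) * (((m-1) - s).choose r) with ht
    have step : ∀ s ∈ range (j+1), f (s+1) = (- t s) + g (s+1) := by
      intro s _
      simp only [hf, hg, ht, Nat.choose_succ_succ]
      have : m - (s+1) = (m-1) - s := by omega
      rw [this]; push_cast; ring
    have hgg : (∑ s ∈ range (j+1), g (s+1)) + g 0 = ∑ s ∈ range (j+2), g s :=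
      (Finset.sum_range_succ' g (j+1)).symm
    have hgg2 : ∑ s ∈ range (j+2), g s = ∑ s ∈ range (j+1), g s := by
      rw [Finset.sum_range_succ]
      simp [hg, Nat.choose_eq_zero_of_lt (Nat.lt_succ_self j)]
    have hg0 : f 0 = g 0 := by simp [hf, hg]
    have hS : ∑ s ∈ range (j+2), f s =
        (∑ s ∈ range (j+1), g s) - ∑ s ∈ range (j+1), t s := by
      rw [Finset.sum_range_succ' f, Finset.sum_congr rfl step, Finset.sum_add_distrib, hg0,
        Finset.sum_neg_distrib]
      linarith [hgg, hgg2]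
    rw [hS]
    have ihm := ih m r (by omega)
    have ihm1 := ih (m-1) r (by omega)
    simp only [hg, ht]
    rw [ihm, ihm1]
    by_cases h1 : r ≤ m - 1
    · rw [if_pos h1, if_pos (by omega), if_pos (by omega)]
      have e3 : m - 1 - j = m - (j+1) := by omega
      have he : m - 1 - r = m - r - 1 := by omega
      have hp : (m - j).choose (m - r) =
          (m - (j+1)).choose (m - r - 1) + (m - (j+1)).choose (m - r) := by
        have e1 : m - j = (m - (j+1)) + 1 := by omega
        have e2 : m - r = (m - r - 1) + 1 := by omega
        rw [e1]
        conv_lhs => rw [e2]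
        rw [Nat.choose_succ_succ, Nat.succ_eq_add_one, ← e2]
      rw [e3, he, hp]
      push_cast; ring
    · by_cases h2 : r ≤ m
      · rw [if_pos h2, if_neg h1, if_pos h2]
        have : m - r = 0 := by omega
        rw [this]
        simp
      · rw [if_neg h1, if_neg h2, if_neg h2]; simp

private lemma ds_vand (n : ℕ) : ∀ a, a < n → ∀ i, i ≤ a →
    ∑ j ∈ range (i+1), (-1:ℤ)^(i+j) * ((a-j).choose (i-j)) * (n.choose j) =
      (((n-1-a)+i).choose i : ℕ) := by
  intro a
  induction a with
  | zero =>
    intro _ i hi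
    interval_cases i
    simp
  | succ a iha =>
    intro han i hi
    rcases Nat.eq_or_lt_of_le hi with hdiag | hlt
    · have hsimp : ∀ j ∈ range (i+1),
          (-1:ℤ)^(i+j) * ((a+1-j).choose (i-j)) * (n.choose j)
            = (-1:ℤ)^i * ((-1:ℤ)^j * (n.choose j)) := by
        intro j hj
        have e : a + 1 - j = i - j := by omega
        rw [e, Nat.choose_self, pow_add]
        push_cast; ring
      rw [Finset.sum_congr rfl hsimp, ← Finset.mul_sum, ds_altsum n (by omega) i, ← mul_assoc,
        ← pow_add]
      have hev : Even (i + i) := ⟨i, by omega⟩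
      rw [hev.neg_one_pow, one_mul]
      have e2 : n - 1 - (a+1) + i = n - 1 := by omega
      rw [e2]
    · have hia : i ≤ a := by omega
      rcases Nat.eq_zero_or_pos i with rfl | hipos
      · simp
      · have step : ∀ j ∈ range i,
            (-1:ℤ)^(i+j) * ((a+1-j).choose (i-j)) * (n.choose j) =
              ((-1:ℤ)^(i+j) * ((a-j).choose (i-j)) * (n.choose j))
              + (-((-1:ℤ)^((i-1)+j) * ((a-j).choose ((i-1)-j)) * (n.choose j))) := by
          intro j hj
          have hji : j < i := mem_range.1 hj
          have e1 : a + 1 - j = (a - j) + 1 := by omega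
          have e2 : i - j = ((i-1) - j) + 1 := by omega
          rw [e1, e2, Nat.choose_succ_succ, ← e2]
          have e4 : i + j = ((i-1) + j) + 1 := by omega
          have e5 : i - j = (i - 1 - j) + 1 := by omega
          rw [e4]
          push_cast
          rw [e5]
          push_cast
          ring
        rw [Finset.sum_range_succ, Finset.sum_congr rfl step, Finset.sum_add_distrib]
        have last : (-1:ℤ)^(i+i) * ((a+1-i).choose (i-i)) * (n.choose i)
            = (-1:ℤ)^(i+i) * ((a-i).choose (i-i)) * (n.choose i) := by
          simp [Nat.sub_self]
        rw [last]
        have hA : (∑ j ∈ range i, (-1:ℤ)^(i+j) * ((a-j).choose (i-j)) * (n.choose j))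
            + (-1:ℤ)^(i+i) * ((a-i).choose (i-i)) * (n.choose i)
            = (((n-1-a)+i).choose i : ℕ) := by
          rw [← Finset.sum_range_succ]
          exact iha (by omega) i hia
        have hB : ∑ j ∈ range i, (-((-1:ℤ)^((i-1)+j) * ((a-j).choose ((i-1)-j)) * (n.choose j)))
            = -((((n-1-a)+(i-1)).choose (i-1) : ℕ) : ℤ) := by
          rw [Finset.sum_neg_distrib]
          congr 1
          have := iha (by omega) (i-1) (by omega)
          rw [show (i-1)+1 = i by omega] at this
          exact this
        rw [add_right_comm, hA, hB]
        have hz : (n - 1 - a) + (i-1) = (n - 1 - (a+1)) + i := by omega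
        rw [hz]
        have hx : (n-1-a) + i = ((n-1-(a+1)) + i) + 1 := by omega
        have hy : i = (i-1) + 1 := by omega
        have hp : ((n-1-a)+i).choose i
            = ((n-1-(a+1))+i).choose (i-1) + ((n-1-(a+1))+i).choose i := by
          rw [hx]
          conv_lhs => rw [hy]
          rw [Nat.choose_succ_succ, Nat.succ_eq_add_one, ← hy]
        rw [hp]
        push_cast; ring

private lemma ds_inversion (d m : ℕ) (hm : m ≤ d) (c : ℕ → ℤ) :
    ∑ i ∈ range (m+1), ((d-i).choose (d-m) : ℤ) *
      (∑ j ∈ range (i+1), (-1:ℤ)^(i+j) * ((d-j).choose (i-j)) * c j) = c m := by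
  set F : ℕ → ℕ → ℤ :=
    fun i j => ((d-i).choose (d-m) : ℤ) * ((-1:ℤ)^(i+j) * ((d-j).choose (i-j)) * c j) with hF
  have expand : ∑ i ∈ range (m+1), ((d-i).choose (d-m) : ℤ) *
      (∑ j ∈ range (i+1), (-1:ℤ)^(i+j) * ((d-j).choose (i-j)) * c j)
      = ∑ i ∈ range (m+1), ∑ j ∈ range (i+1), F i j := by
    refine Finset.sum_congr rfl fun i _ => ?_
    rw [Finset.mul_sum]
  rw [expand]
  have swap : ∑ i ∈ range (m+1), ∑ j ∈ range (i+1), F i j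
      = ∑ j ∈ range (m+1), ∑ i ∈ Finset.Ico j (m+1), F i j := by
    simp_rw [range_eq_Ico]
    exact (Finset.sum_Ico_Ico_comm 0 (m+1) fun x y => F y x).symm
  rw [swap]
  have inner : ∀ j ∈ range (m+1), (∑ i ∈ Finset.Ico j (m+1), F i j)
      = if j = m then c m else 0 := by
    intro j hj
    have hjm : j ≤ m := by simpa [Nat.lt_succ_iff] using mem_range.1 hj
    rw [Finset.sum_Ico_eq_sum_range]
    have hlen : m + 1 - j = (m - j) + 1 := by omega
    rw [hlen]
    have term : ∀ t ∈ range ((m-j)+1), F (j+t) j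
        = ((d-j).choose (m-j) : ℤ) * c j * ((-1:ℤ)^t * ((m-j).choose t)) := by
      intro t ht
      have htm : t ≤ m - j := by simpa [Nat.lt_succ_iff] using mem_range.1 ht
      have e1 : j + t - j = t := by omega
      have e2 : d - (j+t) = (d-j) - t := by omega
      have e3 : (d-j) - t - (d - m) = (m-j) - t := by omega
      have hsymm : ((d-j) - t).choose (d-m) = ((d-j)-t).choose ((m-j)-t) := by
        rw [← e3, Nat.choose_symm (by omega)]
      have hmul : (d-j).choose (m-j) * (m-j).choose t
          = (d-j).choose t * ((d-j)-t).choose ((m-j)-t) :=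
        Nat.choose_mul htm
      have hpow : (-1:ℤ)^(j+t+j) = (-1:ℤ)^t := by
        have hev : Even (j + j) := ⟨j, by omega⟩
        rw [show j+t+j = t + (j+j) by omega, pow_add, hev.neg_one_pow, mul_one]
      simp only [hF, e1, e2, hsymm, hpow]
      have h4 : ((d-j).choose (m-j) * (m-j).choose t : ℤ)
          = ((d-j).choose t * ((d-j)-t).choose ((m-j)-t) : ℤ) := by exact_mod_cast hmul
      push_cast at h4 ⊢
      linear_combination (-(c j) * (-1:ℤ)^t) * h4
    rw [Finset.sum_congr rfl term, ← Finset.mul_sum, Int.alternating_sum_range_choose]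
    by_cases hjm2 : j = m
    · subst hjm2
      simp [Nat.sub_self]
    · rw [if_neg (by omega), if_neg hjm2, mul_zero]
  rw [Finset.sum_congr rfl inner, Finset.sum_ite_eq' (range (m+1)) m fun _ => c m,
    if_pos (self_mem_range_succ m)]

/-! ### Combinatorial lemmas -/

private lemma ds_link_sum {n D : ℕ} (Δ : AbsComplex n)
    (hlink : ∀ F ∈ Δ.faces,
      AbsComplex.reducedEuler (Δ.linkFaces F) = (-1 : ℤ) ^ (2*D + F.card))
    {F : Finset (Fin n)} (hF : F ∈ Δ.faces) :
    ∑ H ∈ Δ.faces.filter (fun H => F ⊆ H), (-1:ℤ)^H.card = -1 := by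
  have hbij : ∑ H ∈ Δ.faces.filter (fun H => F ⊆ H), (-1:ℤ)^H.card
      = ∑ G ∈ Δ.linkFaces F, (-1:ℤ)^(G.card + F.card) := by
    refine Finset.sum_nbij' (fun H => H \ F) (fun G => G ∪ F) ?_ ?_ ?_ ?_ ?_
    · intro H hH
      rw [mem_filter] at hH
      obtain ⟨hHf, hFH⟩ := hH
      rw [AbsComplex.linkFaces, mem_filter]
      refine ⟨Δ.down_closed H hHf _ (sdiff_subset), ?_, ?_⟩
      · simp [Finset.sdiff_inter_self]
      · rw [Finset.sdiff_union_of_subset hFH]; exact hHf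
    · intro G hG
      rw [AbsComplex.linkFaces, mem_filter] at hG
      rw [mem_filter]
      exact ⟨hG.2.2, Finset.subset_union_right⟩
    · intro H hH
      rw [mem_filter] at hH
      exact Finset.sdiff_union_of_subset hH.2
    · intro G hG
      rw [AbsComplex.linkFaces, mem_filter] at hG
      apply Finset.union_sdiff_cancel_right
      have h21 := hG.2.1
      rwa [← Finset.disjoint_iff_inter_eq_empty] at h21
    · intro H hH
      rw [mem_filter] at hH
      congr 1
      rw [Finset.card_sdiff_add_card_eq_card hH.2]
  rw [hbij]
  have heul := hlink F hF
  unfold AbsComplex.reducedEuler at heul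
  have hfac : ∑ G ∈ Δ.linkFaces F, (-1:ℤ)^(G.card + F.card)
      = ((-1:ℤ)^(F.card + 1)) * ∑ G ∈ Δ.linkFaces F, (-1:ℤ)^(G.card + 1) := by
    rw [Finset.mul_sum]
    refine Finset.sum_congr rfl fun G _ => ?_
    simp only [pow_add, pow_succ, pow_zero]
    ring
  rw [hfac, heul, ← pow_add]
  exact Odd.neg_one_pow ⟨D + F.card, by omega⟩

private lemma ds_Es {n D : ℕ} (Δ : AbsComplex n)
    (hlink : ∀ F ∈ Δ.faces,
      AbsComplex.reducedEuler (Δ.linkFaces F) = (-1 : ℤ) ^ (2*D + F.card))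
    (s : ℕ) :
    ∑ H ∈ Δ.faces, (-1:ℤ)^H.card * (H.card.choose s) =
      -(((Δ.faces.filter fun F => F.card = s).card : ℕ) : ℤ) := by
  have count : ∀ H ∈ Δ.faces,
      ((Δ.faces.filter fun F => F.card = s).filter (fun F => F ⊆ H)) = H.powersetCard s := by
    intro H hH
    ext F
    simp only [mem_filter, Finset.mem_powersetCard]
    constructor
    · rintro ⟨⟨_, hc⟩, hsub⟩; exact ⟨hsub, hc⟩
    · rintro ⟨hsub, hc⟩; exact ⟨⟨Δ.down_closed H hH F hsub, hc⟩, hsub⟩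
  have step1 : ∀ H ∈ Δ.faces, (-1:ℤ)^H.card * (H.card.choose s)
      = ∑ F ∈ Δ.faces.filter (fun F => F.card = s), (if F ⊆ H then (-1:ℤ)^H.card else 0) := by
    intro H hH
    rw [← Finset.sum_filter, count H hH, Finset.sum_const, Finset.card_powersetCard,
      nsmul_eq_mul, mul_comm]
  rw [Finset.sum_congr rfl step1, Finset.sum_comm]
  have inner : ∀ F ∈ Δ.faces.filter (fun F => F.card = s),
      ∑ H ∈ Δ.faces, (if F ⊆ H then (-1:ℤ)^H.card else 0) = -1 := by
    intro F hF
    rw [← Finset.sum_filter]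
    exact ds_link_sum Δ hlink (mem_filter.1 hF).1
  rw [Finset.sum_congr rfl inner, Finset.sum_const, nsmul_eq_mul, mul_neg_one]

private lemma ds_fiber {n : ℕ} (Δ : AbsComplex n) (B : ℕ)
    (hbound : ∀ F ∈ Δ.faces, F.card < B) (g : ℕ → ℤ) :
    ∑ H ∈ Δ.faces, g H.card
      = ∑ j ∈ range B, (((Δ.faces.filter fun F => F.card = j).card : ℕ) : ℤ) * g j := by
  rw [← Finset.sum_fiberwise_of_maps_to (g := fun H : Finset (Fin n) => H.card)
    (t := range B) (fun H hH => mem_range.2 (hbound H hH)) (fun H => g H.card)]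
  refine Finset.sum_congr rfl fun j _ => ?_
  rw [Finset.sum_congr rfl (fun H hH => by rw [(mem_filter.1 hH).2]), Finset.sum_const,
    nsmul_eq_mul]


/-- For `k ≥ 2` and a `(k−1)`-neighborly Eulerian complex `Δ` of dimension
`2k` with `n ≥ 2k + 2` vertices,
`f_k(Δ) + (k+2)·(C(n,k) − f_{k−1}(Δ)) = Σ_{i=0}^{k} C(2k+1−i, k)·C(n−2k−2+i, i) + C(n−k−2, k)`. -/
theorem statement3 {n k : ℕ} (hk : 2 ≤ k) (hn : 2 * k + 2 ≤ n) (Δ : AbsComplex n)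
    (hEul : Δ.IsEulerianDim (2 * k)) (hngh : Δ.Neighborly (k - 1)) :
    (Δ.fNum k : ℤ) + ((k : ℤ) + 2) * ((n.choose k : ℤ) - (Δ.fNum (k - 1) : ℤ)) =
      (∑ i ∈ Finset.range (k + 1),
          ((2 * k + 1 - i).choose k : ℤ) * ((n - (2 * k + 2) + i).choose i : ℤ)) +
        ((n - (k + 2)).choose k : ℤ) := by
  classical
  obtain ⟨hbound, -, hlink⟩ := hEul
  set N : ℕ → ℕ := fun j => (Δ.faces.filter fun F => F.card = j).card with hNdef
  -- the Euler relations
  have hE : ∀ s : ℕ, ∑ j ∈ range (2*k+2), (-1:ℤ)^j * (j.choose s) * (N j : ℤ)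
      = -(N s : ℤ) := by
    intro s
    have h1 := ds_Es (D := k) Δ hlink s
    have h2 := ds_fiber Δ (2*k+2) (fun F hF => by have := hbound F hF; omega)
      (fun j => (-1:ℤ)^j * (j.choose s))
    calc ∑ j ∈ range (2*k+2), (-1:ℤ)^j * (j.choose s) * (N j : ℤ)
        = ∑ j ∈ range (2*k+2), (N j : ℤ) * ((-1:ℤ)^j * (j.choose s)) := by
          refine Finset.sum_congr rfl fun j _ => by ring
      _ = ∑ H ∈ Δ.faces, ((-1:ℤ)^H.card * (H.card.choose s)) := h2.symm
      _ = -(N s : ℤ) := h1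
  -- low face numbers
  have hlow : ∀ j, j ≤ k - 1 → (N j : ℤ) = (n.choose j : ℤ) := by
    intro j hj
    have hfilter : Δ.faces.filter (fun F => F.card = j)
        = (Finset.univ : Finset (Fin n)).powersetCard j := by
      ext S
      simp only [mem_filter, Finset.mem_powersetCard]
      constructor
      · rintro ⟨_, hc⟩; exact ⟨Finset.subset_univ _, hc⟩
      · rintro ⟨-, hc⟩
        obtain ⟨T, hST, hT⟩ := Finset.exists_superset_card_eq
          (n := k-1) (s := S) (by omega) (by simp; omega)
        exact ⟨Δ.down_closed T (hngh T hT) S hST, hc⟩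
    have : N j = ((Finset.univ : Finset (Fin n)).powersetCard j).card := by
      rw [hNdef]; exact congrArg Finset.card hfilter
    rw [this, Finset.card_powersetCard]
    simp
  -- the key Dehn--Sommerville relation
  have hkey : ∑ j ∈ range (2*k+2), (-1:ℤ)^(k+1+j) * ((2*k+2-j).choose (k+1)) * (N j : ℤ)
      = 0 := by
    have hsum : ∑ s ∈ range (2*k+2), ((-1:ℤ)^(k+1+s) * ((2*k+1-s).choose (k+1))) *
        ((∑ j ∈ range (2*k+2), (-1:ℤ)^j * (j.choose s) * (N j : ℤ)) + (N s : ℤ)) = 0 := by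
      refine Finset.sum_eq_zero fun s _ => ?_
      rw [hE s]; ring
    have hA : ∀ j ∈ range (2*k+2),
        (∑ s ∈ range (2*k+2), ((-1:ℤ)^(k+1+s) * ((2*k+1-s).choose (k+1))) *
          ((-1:ℤ)^j * (j.choose s) * (N j : ℤ)))
        = (-1:ℤ)^(k+1+j) * ((2*k+1-j).choose k) * (N j : ℤ) := by
      intro j hj
      have hj' : j ≤ 2*k+1 := by have := mem_range.1 hj; omega
      have hout : (∑ s ∈ range (2*k+2), ((-1:ℤ)^(k+1+s) * ((2*k+1-s).choose (k+1))) *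
            ((-1:ℤ)^j * (j.choose s) * (N j : ℤ)))
          = ((-1:ℤ)^(k+1) * ((-1:ℤ)^j * (N j : ℤ))) *
            ∑ s ∈ range (2*k+2), (-1:ℤ)^s * (j.choose s) * ((2*k+1-s).choose (k+1)) := by
        rw [Finset.mul_sum]
        refine Finset.sum_congr rfl fun s _ => ?_
        rw [pow_add]
        ring
      have htrunc : ∑ s ∈ range (2*k+2), (-1:ℤ)^s * (j.choose s) * ((2*k+1-s).choose (k+1))
          = ∑ s ∈ range (j+1), (-1:ℤ)^s * (j.choose s) * ((2*k+1-s).choose (k+1)) := by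
        symm
        refine Finset.sum_subset (by rw [range_subset_range]; omega) ?_
        intro s hs hns
        have : j < s := by
          have := mem_range.1 hs
          simp only [mem_range] at hns
          omega
        rw [Nat.choose_eq_zero_of_lt this]
        push_cast; ring
      rw [hout, htrunc, ds_I1 j (2*k+1) (k+1) hj', if_pos (by omega),
        show 2*k+1-(k+1) = k by omega, pow_add]
      ring
    have hexp1 : ∑ s ∈ range (2*k+2), ((-1:ℤ)^(k+1+s) * ((2*k+1-s).choose (k+1))) *
        ((∑ j ∈ range (2*k+2), (-1:ℤ)^j * (j.choose s) * (N j : ℤ)) + (N s : ℤ))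
        = (∑ s ∈ range (2*k+2), ((-1:ℤ)^(k+1+s) * ((2*k+1-s).choose (k+1))) *
            (∑ j ∈ range (2*k+2), (-1:ℤ)^j * (j.choose s) * (N j : ℤ)))
          + ∑ s ∈ range (2*k+2), ((-1:ℤ)^(k+1+s) * ((2*k+1-s).choose (k+1))) * (N s : ℤ) := by
      rw [← Finset.sum_add_distrib]
      exact Finset.sum_congr rfl fun s _ => mul_add _ _ _
    have hexp2 : (∑ s ∈ range (2*k+2), ((-1:ℤ)^(k+1+s) * ((2*k+1-s).choose (k+1))) *
          (∑ j ∈ range (2*k+2), (-1:ℤ)^j * (j.choose s) * (N j : ℤ)))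
        = ∑ j ∈ range (2*k+2), (-1:ℤ)^(k+1+j) * ((2*k+1-j).choose k) * (N j : ℤ) := by
      calc (∑ s ∈ range (2*k+2), ((-1:ℤ)^(k+1+s) * ((2*k+1-s).choose (k+1))) *
            (∑ j ∈ range (2*k+2), (-1:ℤ)^j * (j.choose s) * (N j : ℤ)))
          = ∑ s ∈ range (2*k+2), ∑ j ∈ range (2*k+2),
              ((-1:ℤ)^(k+1+s) * ((2*k+1-s).choose (k+1))) *
                ((-1:ℤ)^j * (j.choose s) * (N j : ℤ)) := by
            exact Finset.sum_congr rfl fun s _ => Finset.mul_sum _ _ _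
        _ = ∑ j ∈ range (2*k+2), ∑ s ∈ range (2*k+2),
              ((-1:ℤ)^(k+1+s) * ((2*k+1-s).choose (k+1))) *
                ((-1:ℤ)^j * (j.choose s) * (N j : ℤ)) := Finset.sum_comm
        _ = ∑ j ∈ range (2*k+2), (-1:ℤ)^(k+1+j) * ((2*k+1-j).choose k) * (N j : ℤ) :=
            Finset.sum_congr rfl hA
    have hpascal : ∀ j ∈ range (2*k+2),
        (-1:ℤ)^(k+1+j) * ((2*k+2-j).choose (k+1)) * (N j : ℤ)
          = (-1:ℤ)^(k+1+j) * ((2*k+1-j).choose k) * (N j : ℤ)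
            + ((-1:ℤ)^(k+1+j) * ((2*k+1-j).choose (k+1))) * (N j : ℤ) := by
      intro j hj
      have hj' : 2*k+2-j = (2*k+1-j)+1 := by have := mem_range.1 hj; omega
      rw [hj', Nat.choose_succ_succ]
      push_cast; ring
    rw [Finset.sum_congr rfl hpascal, Finset.sum_add_distrib]
    rw [hexp1, hexp2] at hsum
    exact hsum
  -- restrict the key relation
  have hkey2 : ∑ j ∈ range (k+2), (-1:ℤ)^(k+1+j) * ((2*k+2-j).choose (k+1)) * (N j : ℤ)
      = 0 := by
    rw [← hkey]
    refine Finset.sum_subset (by rw [range_subset_range]; omega) ?_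
    intro j hj hnj
    have hjk : k + 2 ≤ j := by simpa [mem_range, not_lt] using hnj
    rw [Nat.choose_eq_zero_of_lt (show 2*k+2-j < k+1 by omega)]
    push_cast; ring
  -- the h-numbers
  set h : ℕ → ℤ :=
    fun i => ∑ j ∈ range (i+1), (-1:ℤ)^(i+j) * ((2*k+1-j).choose (i-j)) * (N j : ℤ) with hh
  have hinv : ∑ i ∈ range (k+2), (((2*k+1-i).choose k : ℕ) : ℤ) * h i = (N (k+1) : ℤ) := by
    have hI := ds_inversion (2*k+1) (k+1) (by omega) (fun j => (N j : ℤ))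
    rw [show (2*k+1) - (k+1) = k by omega] at hI
    exact hI
  have hval : ∀ i, i ≤ k-1 → h i = (((n - (2*k+2) + i).choose i : ℕ) : ℤ) := by
    intro i hi
    have hstep : h i
        = ∑ j ∈ range (i+1), (-1:ℤ)^(i+j) * ((2*k+1-j).choose (i-j)) * (n.choose j : ℤ) := by
      rw [hh]
      refine Finset.sum_congr rfl fun j hj => ?_
      rw [hlow j (by have := mem_range.1 hj; omega)]
    rw [hstep, ds_vand n (2*k+1) (by omega) i (by omega),
      show n-1-(2*k+1) = n - (2*k+2) by omega]
  have hlast1 : (-1:ℤ)^(k+1+(k+1)) * ((2*k+1-(k+1)).choose ((k+1)-(k+1))) * (N (k+1) : ℤ)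
      = (N (k+1) : ℤ) := by
    rw [Nat.sub_self, Nat.choose_zero_right]
    have hev : Even (k+1+(k+1)) := ⟨k+1, by omega⟩
    rw [hev.neg_one_pow]
    push_cast; ring
  have e1 : h (k+1)
      = (∑ j ∈ range (k+1), (-1:ℤ)^(k+1+j) * ((2*k+1-j).choose (k+1-j)) * (N j : ℤ))
        + (N (k+1) : ℤ) := by
    have hb : h (k+1) = ∑ j ∈ range ((k+1)+1),
        (-1:ℤ)^(k+1+j) * ((2*k+1-j).choose (k+1-j)) * (N j : ℤ) := rfl
    rw [hb, Finset.sum_range_succ, hlast1]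
  have hd : h (k+1) = h k := by
    have e3 : ∀ j ∈ range (k+1),
        (-1:ℤ)^(k+1+j) * ((2*k+2-j).choose (k+1)) * (N j : ℤ)
          = (-1:ℤ)^(k+1+j) * ((2*k+1-j).choose (k+1-j)) * (N j : ℤ)
            - (-1:ℤ)^(k+j) * ((2*k+1-j).choose (k-j)) * (N j : ℤ) := by
      intro j hj
      have hjk : j ≤ k := by have := mem_range.1 hj; omega
      have c1 : (2*k+2-j).choose (k+1) = (2*k+2-j).choose (k+1-j) := by
        rw [← Nat.choose_symm (show k+1 ≤ 2*k+2-j by omega)]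
        congr 1
        omega
      have c2 : (2*k+2-j).choose (k+1-j)
          = (2*k+1-j).choose (k-j) + (2*k+1-j).choose (k+1-j) := by
        rw [show 2*k+2-j = (2*k+1-j)+1 by omega]
        conv_lhs => rw [show k+1-j = (k-j)+1 by omega]
        rw [Nat.choose_succ_succ, Nat.succ_eq_add_one, show (k-j)+1 = k+1-j by omega]
      have c3 : (-1:ℤ)^(k+1+j) = -(-1:ℤ)^(k+j) := by
        rw [show k+1+j = (k+j)+1 by omega, pow_succ]
        ring
      rw [c1, c2, c3]
      push_cast; ring
    have e4 : ∑ j ∈ range (k+2), (-1:ℤ)^(k+1+j) * ((2*k+2-j).choose (k+1)) * (N j : ℤ)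
        = (∑ j ∈ range (k+1), (-1:ℤ)^(k+1+j) * ((2*k+2-j).choose (k+1)) * (N j : ℤ))
          + (N (k+1) : ℤ) := by
      rw [Finset.sum_range_succ]
      congr 1
      rw [show 2*k+2-(k+1) = k+1 by omega, Nat.choose_self]
      have hev : Even (k+1+(k+1)) := ⟨k+1, by omega⟩
      rw [hev.neg_one_pow]
      push_cast; ring
    have e5 : ∑ j ∈ range (k+1), (-1:ℤ)^(k+1+j) * ((2*k+2-j).choose (k+1)) * (N j : ℤ)
        = (∑ j ∈ range (k+1), (-1:ℤ)^(k+1+j) * ((2*k+1-j).choose (k+1-j)) * (N j : ℤ))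
          - ∑ j ∈ range (k+1), (-1:ℤ)^(k+j) * ((2*k+1-j).choose (k-j)) * (N j : ℤ) := by
      rw [Finset.sum_congr rfl e3, Finset.sum_sub_distrib]
    have hhk : h k = ∑ j ∈ range (k+1), (-1:ℤ)^(k+j) * ((2*k+1-j).choose (k-j)) * (N j : ℤ) := by
      rw [hh]
    rw [e4, e5] at hkey2
    rw [e1, hhk]
    linarith [hkey2]
  have hNk1 : (N (k+1) : ℤ)
      = (∑ i ∈ range k, (((2*k+1-i).choose k : ℕ) : ℤ) * h i) + ((k:ℤ)+2) * h k := by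
    rw [← hinv, Finset.sum_range_succ, Finset.sum_range_succ,
      show 2*k+1-k = k+1 by omega, show 2*k+1-(k+1) = k by omega, Nat.choose_self,
      Nat.choose_succ_self_right, hd]
    push_cast; ring
  have hkval : h k + ((n.choose k : ℤ) - (N k : ℤ)) = (((n-(k+2)).choose k : ℕ) : ℤ) := by
    have hlastN : (-1:ℤ)^(k+k) * ((2*k+1-k).choose (k-k)) * (N k : ℤ) = (N k : ℤ) := by
      rw [Nat.sub_self, Nat.choose_zero_right]
      have hev : Even (k+k) := ⟨k, by omega⟩
      rw [hev.neg_one_pow]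
      push_cast; ring
    have hlastC : (-1:ℤ)^(k+k) * ((2*k+1-k).choose (k-k)) * (n.choose k : ℤ)
        = (n.choose k : ℤ) := by
      rw [Nat.sub_self, Nat.choose_zero_right]
      have hev : Even (k+k) := ⟨k, by omega⟩
      rw [hev.neg_one_pow]
      push_cast; ring
    have e6 : h k = (∑ j ∈ range k, (-1:ℤ)^(k+j) * ((2*k+1-j).choose (k-j)) * (n.choose j : ℤ))
        + (N k : ℤ) := by
      have hb : h k = ∑ j ∈ range (k+1),
          (-1:ℤ)^(k+j) * ((2*k+1-j).choose (k-j)) * (N j : ℤ) := rfl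
      rw [hb, Finset.sum_range_succ, hlastN]
      congr 1
      refine Finset.sum_congr rfl fun j hj => ?_
      rw [hlow j (by have := mem_range.1 hj; omega)]
    have e7 : ∑ j ∈ range (k+1), (-1:ℤ)^(k+j) * ((2*k+1-j).choose (k-j)) * (n.choose j : ℤ)
        = (((n-(k+2)).choose k : ℕ) : ℤ) := by
      rw [ds_vand n (2*k+1) (by omega) k (by omega)]
      congr 2
      omega
    rw [Finset.sum_range_succ, hlastC] at e7
    linarith [e6, e7]
  -- translate the goal
  have hfk : (Δ.fNum k : ℤ) = (N (k+1) : ℤ) := rfl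
  have hfk1 : (Δ.fNum (k-1) : ℤ) = (N k : ℤ) := by
    have hkk : k - 1 + 1 = k := by omega
    simp only [AbsComplex.fNum, hkk, hNdef]
  have hrhs : (∑ i ∈ Finset.range (k + 1),
        ((2 * k + 1 - i).choose k : ℤ) * ((n - (2 * k + 2) + i).choose i : ℤ))
      = (∑ i ∈ range k, ((2*k+1-i).choose k : ℤ) * ((n - (2*k+2) + i).choose i : ℤ))
        + ((k:ℤ)+1) * (((n-(k+2)).choose k : ℕ) : ℤ) := by
    rw [Finset.sum_range_succ, show 2*k+1-k = k+1 by omega, Nat.choose_succ_self_right,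
      show n-(2*k+2)+k = n-(k+2) by omega]
    push_cast; ring
  have hsum_eq : ∑ i ∈ range k, (((2*k+1-i).choose k : ℕ) : ℤ) * h i
      = ∑ i ∈ range k, ((2*k+1-i).choose k : ℤ) * ((n - (2*k+2) + i).choose i : ℤ) := by
    refine Finset.sum_congr rfl fun i hi => ?_
    rw [hval i (by have := mem_range.1 hi; omega)]
  rw [hfk, hfk1, hrhs]
  linear_combination hNk1 + ((k:ℤ)+2) * hkval + hsum_eq
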